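/- arXiv:1805.03694 — 3 statements merged into one kernel-verified Lean document; each statement's English description precedes it below -/
import Mathlib

section
/- Let m > 0 be a real number and n ≥ 3 an integer, let x₀ ∈ ℝ^{n−1} and τ > 0. Then at every interior point (x,t) of ℝⁿ₊ (i.e. with t > 0), the function w_{x₀,τ} satisfies −τ^{m/(2(m+n−1))} · Δw_{x₀,τ}(x,t) + ((m+n−1)/(m+n−2)) · τ^{−1/2} · w_{x₀,τ}(x,t)^{(m+n)/(m+n−2)} = 0, where Δ denotes the Euclidean Laplacian in the variables (x,t). -/
open MeasureTheory Real

noncomputable section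

/-- The constant `c(m,n) = (m+n−1)/(m(m+n−2)²)`. -/
def cmn (m : ℝ) (n : ℕ) : ℝ := (m + n - 1) / (m * (m + n - 2) ^ 2)

/-- The model function
`w_{x₀,τ}(x,t) = τ^{−(n−1)(m+n−2)/(4(m+n−1))}
  [(1 + (c(m,n)/τ)^{1/2} t)² + c(m,n)|x−x₀|²/τ]^{−(m+n−2)/2}`. -/
def wModel (m : ℝ) (n : ℕ) (x₀ : EuclideanSpace ℝ (Fin (n - 1))) (τ : ℝ)
    (p : EuclideanSpace ℝ (Fin (n - 1)) × ℝ) : ℝ :=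
  τ ^ (-(((n : ℝ) - 1) * (m + n - 2)) / (4 * (m + n - 1))) *
    ((1 + (cmn m n / τ) ^ ((1 : ℝ) / 2) * p.2) ^ 2 + cmn m n * ‖p.1 - x₀‖ ^ 2 / τ) ^
      (-((m + n - 2) / 2))

/-- Second directional derivative of `w` at `p` in direction `v`. -/
def secondDeriv (n : ℕ) (w : EuclideanSpace ℝ (Fin (n - 1)) × ℝ → ℝ)
    (p v : EuclideanSpace ℝ (Fin (n - 1)) × ℝ) : ℝ :=
  fderiv ℝ (fun q => fderiv ℝ w q v) p v

/-- The Euclidean Laplacian of `w` on the half-space, computed in the coordinates `(x,t)`. -/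
def lap (n : ℕ) (w : EuclideanSpace ℝ (Fin (n - 1)) × ℝ → ℝ)
    (p : EuclideanSpace ℝ (Fin (n - 1)) × ℝ) : ℝ :=
  (∑ i : Fin (n - 1), secondDeriv n w p (EuclideanSpace.single i (1 : ℝ), 0)) +
    secondDeriv n w p (0, 1)


variable {N : ℕ}

local notation "E" => EuclideanSpace ℝ (Fin N)

/-- `F b k x₀ p = (1+b p.2)^2 + k ‖p.1-x₀‖²`. -/
def auxF (b k : ℝ) (x₀ : E) (p : E × ℝ) : ℝ :=
  (1 + b * p.2) ^ 2 + k * ‖p.1 - x₀‖ ^ 2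

/-- derivative of `auxF` -/
def auxF' (b k : ℝ) (x₀ : E) (q : E × ℝ) : (E × ℝ) →L[ℝ] ℝ :=
  (2 * (1 + b * q.2) * b) • ContinuousLinearMap.snd ℝ E ℝ +
    k • (2 • ((innerSL ℝ (q.1 - x₀)).comp (ContinuousLinearMap.fst ℝ E ℝ)))

lemma auxF'_apply (b k : ℝ) (x₀ : E) (q v : E × ℝ) :
    auxF' b k x₀ q v = 2 * (1 + b * q.2) * b * v.2 + k * (2 * inner ℝ (q.1 - x₀) v.1) := by
  simp only [auxF', ContinuousLinearMap.add_apply, ContinuousLinearMap.smul_apply,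
    ContinuousLinearMap.coe_smul', Pi.smul_apply, ContinuousLinearMap.coe_comp',
    Function.comp_apply, ContinuousLinearMap.coe_fst', ContinuousLinearMap.coe_snd',
    innerSL_apply_apply, smul_eq_mul]
  ring

lemma hasFDerivAt_auxF (b k : ℝ) (x₀ : E) (q : E × ℝ) :
    HasFDerivAt (auxF b k x₀) (auxF' b k x₀ q) q := by
  have h1 : HasFDerivAt (fun p : E × ℝ => (1 + b * p.2) ^ 2)
      ((2 * (1 + b * q.2) * b) • ContinuousLinearMap.snd ℝ E ℝ) q := by
    have hd : HasDerivAt (fun s : ℝ => (1 + b * s) ^ 2) (2 * (1 + b * q.2) ^ 1 * b) q.2 := by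
      have h0' : HasDerivAt (fun s : ℝ => b * s) (b * 1) q.2 :=
        HasDerivAt.const_mul (𝕜 := ℝ) b (hasDerivAt_id q.2)
      have h0 : HasDerivAt (fun s : ℝ => b * s) b q.2 := by simpa using h0'
      have : HasDerivAt (fun s : ℝ => 1 + b * s) b q.2 := h0.const_add 1
      simpa using this.fun_pow 2
    have := HasDerivAt.comp_hasFDerivAt (𝕜 := ℝ) q hd hasFDerivAt_snd
    simpa [Function.comp_def] using this
  have h2 : HasFDerivAt (fun p : E × ℝ => k * ‖p.1 - x₀‖ ^ 2)
      (k • (2 • ((innerSL ℝ (q.1 - x₀)).comp (ContinuousLinearMap.fst ℝ E ℝ)))) q := by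
    have hsub : HasFDerivAt (fun p : E × ℝ => p.1 - x₀) (ContinuousLinearMap.fst ℝ E ℝ) q :=
      hasFDerivAt_fst.sub_const x₀
    exact hsub.norm_sq.const_mul k
  exact (h1.add h2 : _)

lemma hasFDerivAt_wAux (b k C e : ℝ) (x₀ : E) (q : E × ℝ) (hq : 0 < auxF b k x₀ q) :
    HasFDerivAt (fun q => C * auxF b k x₀ q ^ e)
      ((C * (e * auxF b k x₀ q ^ (e - 1))) • auxF' b k x₀ q) q := by
  have := ((hasFDerivAt_auxF b k x₀ q).rpow_const (p := e) (Or.inl hq.ne')).const_mul C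
  simpa [smul_smul] using this

lemma continuous_auxF (b k : ℝ) (x₀ : E) : Continuous (auxF b k x₀) := by
  unfold auxF; fun_prop

lemma fderiv_wAux_apply (b k C e : ℝ) (x₀ : E) (q v : E × ℝ) (hq : 0 < auxF b k x₀ q) :
    fderiv ℝ (fun q => C * auxF b k x₀ q ^ e) q v =
      (C * e) * (auxF b k x₀ q ^ (e - 1) *
        (2 * b * v.2 * (1 + b * q.2) + 2 * k * (inner ℝ v.1 (q.1 - x₀) : ℝ))) := by
  rw [(hasFDerivAt_wAux b k C e x₀ q hq).fderiv]
  rw [ContinuousLinearMap.smul_apply, auxF'_apply]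
  rw [real_inner_comm]
  simp only [smul_eq_mul]
  ring

lemma secondDeriv_wAux (b k C e : ℝ) (x₀ : E) (p v : E × ℝ) (hp : 0 < auxF b k x₀ p) :
    fderiv ℝ (fun q => fderiv ℝ (fun q' => C * auxF b k x₀ q' ^ e) q v) p v =
      (C * e) * ((e - 1) * auxF b k x₀ p ^ (e - 2) *
          (2 * b * v.2 * (1 + b * p.2) + 2 * k * (inner ℝ v.1 (p.1 - x₀) : ℝ)) ^ 2 +
        auxF b k x₀ p ^ (e - 1) * (2 * b * b * v.2 ^ 2 + 2 * k * (inner ℝ v.1 v.1 : ℝ))) := by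
  -- the affine function G
  set G : E × ℝ → ℝ := fun q => 2 * b * v.2 * (1 + b * q.2) + 2 * k * (inner ℝ v.1 (q.1 - x₀) : ℝ)
    with hG
  -- derivative of G
  set M : (E × ℝ) →L[ℝ] ℝ := (innerSL ℝ v.1).comp (ContinuousLinearMap.fst ℝ E ℝ) with hM
  have hGder : HasFDerivAt G ((2 * b * v.2 * b) • ContinuousLinearMap.snd ℝ E ℝ + (2 * k) • M) p := by
    have ha : HasFDerivAt (fun q : E × ℝ => 2 * b * v.2 * (1 + b * q.2))
        ((2 * b * v.2 * b) • ContinuousLinearMap.snd ℝ E ℝ) p := by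
      have h0' : HasDerivAt (fun s : ℝ => b * s) (b * 1) p.2 :=
        HasDerivAt.const_mul (𝕜 := ℝ) b (hasDerivAt_id p.2)
      have h0 : HasDerivAt (fun s : ℝ => b * s) b p.2 := by simpa using h0'
      have h1 : HasDerivAt (fun s : ℝ => 1 + b * s) b p.2 := h0.const_add 1
      have h2 : HasDerivAt (fun s : ℝ => 2 * b * v.2 * (1 + b * s)) (2 * b * v.2 * b) p.2 :=
        HasDerivAt.const_mul (𝕜 := ℝ) (2 * b * v.2) h1
      have := HasDerivAt.comp_hasFDerivAt (𝕜 := ℝ) p h2 hasFDerivAt_snd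
      simpa [Function.comp_def] using this
    have hb : HasFDerivAt (fun q : E × ℝ => 2 * k * (inner ℝ v.1 (q.1 - x₀) : ℝ)) ((2 * k) • M) p := by
      have hfun : (fun q : E × ℝ => 2 * k * (inner ℝ v.1 (q.1 - x₀) : ℝ)) =
          fun q : E × ℝ => 2 * k * M q - 2 * k * (inner ℝ v.1 x₀ : ℝ) := by
        funext q
        rw [hM]
        simp only [ContinuousLinearMap.coe_comp', Function.comp_apply,
          ContinuousLinearMap.coe_fst', innerSL_apply_apply]
        rw [inner_sub_right]
        ring
      rw [hfun]
      exact (M.hasFDerivAt.const_mul (2 * k)).sub_const _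
    exact ha.add hb
  -- derivative of q ↦ auxF q ^ (e-1)
  have hPow : HasFDerivAt (fun q => auxF b k x₀ q ^ (e - 1))
      (((e - 1) * auxF b k x₀ p ^ (e - 1 - 1)) • auxF' b k x₀ p) p :=
    (hasFDerivAt_auxF b k x₀ p).rpow_const (Or.inl hp.ne')
  -- product
  have hprod := (hPow.fun_mul hGder).const_mul (C * e)
  -- the function q ↦ fderiv w q v agrees with (C*e) * (auxF^(e-1) * G) near p
  have hopen : IsOpen {q : E × ℝ | 0 < auxF b k x₀ q} :=
    isOpen_lt continuous_const (continuous_auxF b k x₀)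
  have hmem : {q : E × ℝ | 0 < auxF b k x₀ q} ∈ nhds p := hopen.mem_nhds hp
  have heq : (fun q => fderiv ℝ (fun q' => C * auxF b k x₀ q' ^ e) q v) =ᶠ[nhds p]
      (fun q => (C * e) * (auxF b k x₀ q ^ (e - 1) * G q)) := by
    filter_upwards [hmem] with q hq
    exact fderiv_wAux_apply b k C e x₀ q v hq
  rw [heq.fderiv_eq, hprod.fderiv]
  simp only [ContinuousLinearMap.smul_apply, ContinuousLinearMap.add_apply,
    ContinuousLinearMap.coe_smul', Pi.smul_apply, ContinuousLinearMap.coe_snd',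
    ContinuousLinearMap.coe_comp', Function.comp_apply, ContinuousLinearMap.coe_fst',
    innerSL_apply_apply, smul_eq_mul, hM]
  rw [auxF'_apply, hG]
  have hcomm : (inner ℝ (p.1 - x₀) v.1 : ℝ) = (inner ℝ v.1 (p.1 - x₀) : ℝ) := real_inner_comm _ _
  rw [hcomm]
  have h12 : e - 1 - 1 = e - 2 := by ring
  rw [h12]
  ring

theorem wModel_interior_equation (m : ℝ) (hm : 0 < m) (n : ℕ) (hn : 3 ≤ n)
    (x₀ : EuclideanSpace ℝ (Fin (n - 1))) (τ : ℝ) (hτ : 0 < τ)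
    (x : EuclideanSpace ℝ (Fin (n - 1))) (t : ℝ) (ht : 0 < t) :
    -τ ^ (m / (2 * (m + n - 1))) * lap n (wModel m n x₀ τ) (x, t) +
        ((m + n - 1) / (m + n - 2)) * τ ^ (-(1 : ℝ) / 2) *
          wModel m n x₀ τ (x, t) ^ ((m + n) / (m + n - 2)) = 0 := by
  have hn3 : (3 : ℝ) ≤ (n : ℝ) := by exact_mod_cast hn
  have h2 : (0 : ℝ) < m + n - 2 := by linarith
  have h1 : (0 : ℝ) < m + n - 1 := by linarith
  have hcpos : 0 < cmn m n := by
    unfold cmn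
    positivity
  set k : ℝ := cmn m n / τ with hk
  have hkpos : 0 < k := div_pos hcpos hτ
  set b : ℝ := (cmn m n / τ) ^ ((1 : ℝ) / 2) with hb
  have hbnn : 0 ≤ b := Real.rpow_nonneg hkpos.le _
  have hbb : b * b = k := by
    rw [hb, ← Real.rpow_add hkpos]
    norm_num
  set C : ℝ := τ ^ (-(((n : ℝ) - 1) * (m + n - 2)) / (4 * (m + n - 1))) with hC
  set e : ℝ := -((m + (n : ℝ) - 2) / 2) with he
  -- rewrite wModel in auxF form
  have hw : wModel m n x₀ τ = fun q => C * auxF b k x₀ q ^ e := by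
    funext q
    unfold wModel auxF
    rw [← hC, ← he, ← hb]
    congr 2
    rw [hk]
    ring
  -- positivity of auxF at (x, t)
  have hQ : 0 < 1 + b * t := by positivity
  have hp : 0 < auxF b k x₀ (x, t) := by
    unfold auxF
    have : 0 ≤ k * ‖x - x₀‖ ^ 2 := by positivity
    nlinarith
  set F : ℝ := auxF b k x₀ (x, t) with hF
  -- Laplacian computation
  have hsd : ∀ v : EuclideanSpace ℝ (Fin (n - 1)) × ℝ,
      secondDeriv n (wModel m n x₀ τ) (x, t) v =
        (C * e) * ((e - 1) * F ^ (e - 2) *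
            (2 * b * v.2 * (1 + b * t) + 2 * k * (inner ℝ v.1 (x - x₀) : ℝ)) ^ 2 +
          F ^ (e - 1) * (2 * b * b * v.2 ^ 2 + 2 * k * (inner ℝ v.1 v.1 : ℝ))) := by
    intro v
    rw [secondDeriv, hw]
    exact secondDeriv_wAux b k C e x₀ (x, t) v hp
  -- second derivatives in coordinate directions
  have hxdir : ∀ i : Fin (n - 1),
      secondDeriv n (wModel m n x₀ τ) (x, t) (EuclideanSpace.single i (1 : ℝ), 0) =
        (C * e) * ((e - 1) * F ^ (e - 2) * (2 * k * (x - x₀) i) ^ 2 + F ^ (e - 1) * (2 * k)) := by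
    intro i
    rw [hsd]
    have h1' : (inner ℝ (EuclideanSpace.single i (1 : ℝ)) (x - x₀) : ℝ) = (x - x₀) i := by
      rw [EuclideanSpace.inner_single_left]; simp
    have h2' : (inner ℝ (EuclideanSpace.single i (1 : ℝ)) (EuclideanSpace.single i (1 : ℝ)) : ℝ)
        = 1 := by
      rw [EuclideanSpace.inner_single_left]; simp
    simp only [h1', h2']
    ring
  have htdir : secondDeriv n (wModel m n x₀ τ) (x, t) (0, 1) =
      (C * e) * ((e - 1) * F ^ (e - 2) * (2 * b * (1 + b * t)) ^ 2 + F ^ (e - 1) * (2 * k)) := by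
    rw [hsd]
    simp only [inner_zero_left]
    linear_combination (C * e * F ^ (e - 1) * 2) * hbb
  -- the sum over coordinates
  have hnorm : ∑ i : Fin (n - 1), ((x - x₀) i) ^ 2 = ‖x - x₀‖ ^ 2 := by
    rw [EuclideanSpace.norm_eq, Real.sq_sqrt (by positivity)]
    congr 1
    funext i
    rw [Real.norm_eq_abs, sq_abs]
  have hcard : ((Finset.univ : Finset (Fin (n - 1))).card : ℝ) = (n : ℝ) - 1 := by
    simp only [Finset.card_univ, Fintype.card_fin]
    have : (1 : ℕ) ≤ n := by omega
    push_cast [Nat.cast_sub this]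
    ring
  have hlap : lap n (wModel m n x₀ τ) (x, t) =
      (C * e) * ((e - 1) * F ^ (e - 2) * (4 * k ^ 2 * ‖x - x₀‖ ^ 2 + 4 * k * (1 + b * t) ^ 2)
        + F ^ (e - 1) * (2 * k * ((n : ℝ) - 1) + 2 * k)) := by
    rw [lap]
    rw [Finset.sum_congr rfl fun i _ => hxdir i, htdir]
    have hpt : ∀ i : Fin (n - 1),
        C * e * ((e - 1) * F ^ (e - 2) * (2 * k * (x - x₀) i) ^ 2 + F ^ (e - 1) * (2 * k)) =
          (C * e * (e - 1) * F ^ (e - 2) * 4 * k ^ 2) * ((x - x₀) i) ^ 2 +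
            C * e * F ^ (e - 1) * 2 * k := fun i => by ring
    rw [Finset.sum_congr rfl fun i _ => hpt i, Finset.sum_add_distrib, ← Finset.mul_sum,
      hnorm, Finset.sum_const, nsmul_eq_mul, hcard]
    linear_combination (C * e * (e - 1) * F ^ (e - 2) * 4 * (1 + b * t) ^ 2) * hbb
  -- simplify the Laplacian
  have hFdef : F = (1 + b * t) ^ 2 + k * ‖x - x₀‖ ^ 2 := rfl
  have hF1 : F ^ (e - 1) = F ^ (e - 2) * F := by
    rw [show e - 1 = (e - 2) + 1 by ring, Real.rpow_add_one hp.ne']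
  have hcoef : e * (4 * k * (e - 1) + 2 * k * (n : ℝ)) =
      (m + (n : ℝ) - 1) / (m + (n : ℝ) - 2) / τ := by
    rw [he, hk]
    unfold cmn
    field_simp
    ring
  have hexp : e * ((m + (n : ℝ)) / (m + (n : ℝ) - 2)) = e - 1 := by
    rw [he]
    field_simp
    ring
  have hCpos : 0 < C := Real.rpow_pos_of_pos hτ _
  have hwx : wModel m n x₀ τ (x, t) = C * F ^ e := by rw [hw]
  have hkey : τ ^ (m / (2 * (m + (n : ℝ) - 1))) * C / τ =
      τ ^ (-(1 : ℝ) / 2) * C ^ ((m + (n : ℝ)) / (m + (n : ℝ) - 2)) := by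
    rw [hC, ← Real.rpow_mul hτ.le, ← Real.rpow_add hτ, ← Real.rpow_add hτ]
    rw [show ∀ a : ℝ, τ ^ a / τ = τ ^ (a - 1) from fun a => by
      rw [Real.rpow_sub hτ, Real.rpow_one]]
    congr 1
    field_simp
    ring
  clear_value F e C b k
  have hlap2 : lap n (wModel m n x₀ τ) (x, t) =
      C * F ^ (e - 1) * ((m + (n : ℝ) - 1) / (m + (n : ℝ) - 2) / τ) := by
    rw [hlap]
    linear_combination (C * F ^ (e - 1)) * hcoef +
      (-(4 * C * e * k * (e - 1) * F ^ (e - 2))) * hFdef +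
      (-(4 * C * e * k * (e - 1))) * hF1
  have hpow : (C * F ^ e) ^ ((m + (n : ℝ)) / (m + (n : ℝ) - 2)) =
      C ^ ((m + (n : ℝ)) / (m + (n : ℝ) - 2)) * F ^ (e - 1) := by
    rw [Real.mul_rpow hCpos.le (Real.rpow_nonneg hp.le _), ← Real.rpow_mul hp.le, hexp]
  rw [hlap2, hwx, hpow]
  linear_combination (-((m + (n : ℝ) - 1) / (m + (n : ℝ) - 2) * F ^ (e - 1))) * hkey
end
end

section
/- Let m > 0 be a real number and n ≥ 3 an integer. There exists a constant C > 0 depending only on m and n such that for every ε ∈ (0,1] and every τ ∈ (0, c(m,n)·ε²], one has ∫_{{x ∈ ℝ^{n−1} : |x| ≥ ε}} w_{0,τ}(x,0)^{2(m+n−1)/(m+n−2)} dx ≤ C · ε^{1−n−2m} · τ^{m+(n−1)/2}. -/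
open MeasureTheory Real Set

noncomputable section

lemma tail_integrableOn (k : ℕ) (s ε : ℝ) (hs : (k : ℝ) < s) (hε : 0 < ε) :
    IntegrableOn (fun x : EuclideanSpace ℝ (Fin k) => ‖x‖ ^ (-s))
      {x : EuclideanSpace ℝ (Fin k) | ε ≤ ‖x‖} := by
  have hs0 : 0 ≤ s := le_trans (Nat.cast_nonneg k) hs.le
  have h1 : Integrable (fun x : EuclideanSpace ℝ (Fin k) => (1 + 1/ε) ^ s * (1 + ‖x‖) ^ (-s)) :=
    (integrable_one_add_norm (by rwa [finrank_euclideanSpace_fin])).const_mul _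
  have hmeas : MeasurableSet {x : EuclideanSpace ℝ (Fin k) | ε ≤ ‖x‖} :=
    measurableSet_le measurable_const measurable_norm
  refine (h1.restrict (s := {x : EuclideanSpace ℝ (Fin k) | ε ≤ ‖x‖})).mono' ?_ ?_
  · exact (Measurable.aestronglyMeasurable (by fun_prop))
  · filter_upwards [ae_restrict_mem hmeas] with x hx
    have hx0 : 0 < ‖x‖ := lt_of_lt_of_le hε hx
    rw [Real.norm_eq_abs, abs_of_nonneg (rpow_nonneg (norm_nonneg x) _)]
    have key : ‖x‖⁻¹ ≤ (1 + 1/ε) / (1 + ‖x‖) := by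
      rw [inv_eq_one_div, div_le_div_iff₀ hx0 (by positivity), one_mul]
      have h2 : (1 + 1/ε) * ‖x‖ = ‖x‖ + ‖x‖/ε := by ring
      have h3 : 1 ≤ ‖x‖/ε := (one_le_div hε).2 hx
      rw [h2]; linarith
    calc ‖x‖ ^ (-s) = (‖x‖⁻¹) ^ s := by
          rw [Real.rpow_neg hx0.le, ← Real.inv_rpow hx0.le]
      _ ≤ ((1 + 1/ε) / (1 + ‖x‖)) ^ s :=
          Real.rpow_le_rpow (inv_nonneg.2 (norm_nonneg x)) key hs0
      _ = (1 + 1/ε) ^ s * (1 + ‖x‖) ^ (-s) := by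
          rw [Real.div_rpow (by positivity) (by positivity), Real.rpow_neg (by positivity),
            div_eq_mul_inv]

lemma tail_integral (k : ℕ) (hk : 1 ≤ k) (s ε : ℝ) (hs : (k : ℝ) < s) (hε : 0 < ε) :
    (∫ x in {x : EuclideanSpace ℝ (Fin k) | ε ≤ ‖x‖}, ‖x‖ ^ (-s))
      = ((k : ℝ) * (volume (Metric.ball (0 : EuclideanSpace ℝ (Fin k)) 1)).toReal) *
          (ε ^ ((k : ℝ) - s) / (s - k)) := by
  haveI : NeZero k := ⟨by omega⟩
  have hmeas : MeasurableSet {x : EuclideanSpace ℝ (Fin k) | ε ≤ ‖x‖} :=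
    measurableSet_le measurable_const measurable_norm
  rw [← integral_indicator hmeas]
  have h1 : ∀ x : EuclideanSpace ℝ (Fin k),
      Set.indicator {y : EuclideanSpace ℝ (Fin k) | ε ≤ ‖y‖} (fun y => ‖y‖ ^ (-s)) x
        = Set.indicator (Ici ε) (fun r : ℝ => r ^ (-s)) ‖x‖ := by
    intro x
    by_cases h : ε ≤ ‖x‖ <;> simp [Set.indicator_apply, h]
  simp_rw [h1]
  rw [integral_fun_norm_addHaar volume (Set.indicator (Ici ε) (fun r : ℝ => r ^ (-s))),
    finrank_euclideanSpace_fin]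
  have h2 : (∫ y in Ioi (0:ℝ), y ^ (k - 1) • Set.indicator (Ici ε) (fun r : ℝ => r ^ (-s)) y)
      = ∫ y in Ioi ε, y ^ ((k : ℝ) - 1 - s) := by
    have h3 : ∀ y : ℝ, y ^ (k - 1) • Set.indicator (Ici ε) (fun r : ℝ => r ^ (-s)) y
        = Set.indicator (Ici ε) (fun r : ℝ => r ^ (k - 1) * r ^ (-s)) y := by
      intro y
      by_cases h : y ∈ Ici ε <;> simp [Set.indicator_apply, h]
    simp_rw [h3]
    rw [integral_indicator measurableSet_Ici, Measure.restrict_restrict measurableSet_Ici]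
    have hIci : Ici ε ∩ Ioi (0:ℝ) = Ici ε :=
      Set.inter_eq_left.2 fun y hy => lt_of_lt_of_le hε hy
    rw [hIci, integral_Ici_eq_integral_Ioi]
    refine setIntegral_congr_fun measurableSet_Ioi fun y hy => ?_
    have hy0 : 0 < y := hε.trans hy
    rw [← Real.rpow_natCast y (k - 1), ← Real.rpow_add hy0]
    congr 1
    rw [Nat.cast_sub hk]
    push_cast
    ring
  rw [h2, integral_Ioi_rpow_of_lt (by linarith) hε]
  rw [show (k : ℝ) - 1 - s + 1 = (k : ℝ) - s by ring]
  rw [nsmul_eq_mul, smul_eq_mul, show ((k:ℝ) - s) = -(s - (k:ℝ)) from by ring,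
    div_neg, neg_div, neg_neg]
  rw [measureReal_def]
  ring

theorem wModel_boundary_tail_estimate (m : ℝ) (hm : 0 < m) (n : ℕ) (hn : 3 ≤ n) :
    ∃ C : ℝ, 0 < C ∧ ∀ ε : ℝ, 0 < ε → ε ≤ 1 → ∀ τ : ℝ, 0 < τ → τ ≤ cmn m n * ε ^ 2 →
      (∫ x in {x : EuclideanSpace ℝ (Fin (n - 1)) | ε ≤ ‖x‖},
          wModel m n 0 τ (x, (0 : ℝ)) ^ (2 * (m + n - 1) / (m + n - 2))) ≤
        C * ε ^ (1 - (n : ℝ) - 2 * m) * τ ^ (m + ((n : ℝ) - 1) / 2) := by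
  have hn3 : (3 : ℝ) ≤ (n : ℝ) := by exact_mod_cast hn
  have h2 : (0 : ℝ) < m + n - 2 := by linarith
  have h1 : (0 : ℝ) < m + n - 1 := by linarith
  have hc : 0 < cmn m n := div_pos h1 (by positivity)
  have hkcast : ((n - 1 : ℕ) : ℝ) = (n : ℝ) - 1 := by
    rw [Nat.cast_sub (by omega)]; norm_num
  have hks : ((n - 1 : ℕ) : ℝ) < 2 * (m + (n : ℝ) - 1) := by rw [hkcast]; linarith
  have hV : 0 < (volume (Metric.ball (0 : EuclideanSpace ℝ (Fin (n - 1))) 1)).toReal :=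
    ENNReal.toReal_pos (Metric.measure_ball_pos volume (0 : EuclideanSpace ℝ (Fin (n - 1))) one_pos).ne' measure_ball_lt_top.ne
  set V : ℝ := (volume (Metric.ball (0 : EuclideanSpace ℝ (Fin (n - 1))) 1)).toReal with hV_def
  refine ⟨(cmn m n)⁻¹ ^ (m + (n : ℝ) - 1) *
      (((n : ℝ) - 1) * V / (2 * (m + (n : ℝ) - 1) - ((n : ℝ) - 1))), ?_, ?_⟩
  · have hpos : (0:ℝ) < 2 * (m + (n : ℝ) - 1) - ((n:ℝ) - 1) := by linarith
    have h0 : (0:ℝ) < (cmn m n)⁻¹ ^ (m + (n : ℝ) - 1) := Real.rpow_pos_of_pos (by positivity) _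
    exact mul_pos h0 (div_pos (mul_pos (by linarith) hV) hpos)
  intro ε hε hε1 τ hτ hτc
  have hmeas : MeasurableSet {x : EuclideanSpace ℝ (Fin (n - 1)) | ε ≤ ‖x‖} :=
    measurableSet_le measurable_const measurable_norm
  have hw : ∀ x : EuclideanSpace ℝ (Fin (n - 1)),
      wModel m n 0 τ (x, (0 : ℝ)) ^ (2 * (m + (n:ℝ) - 1) / (m + (n:ℝ) - 2))
        = τ ^ (-(((n : ℝ) - 1) / 2)) *
            (1 + cmn m n * ‖x‖ ^ 2 / τ) ^ (-(m + (n : ℝ) - 1)) := by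
    intro x
    have hA0 : (0:ℝ) ≤ cmn m n * ‖x‖ ^ 2 / τ :=
      div_nonneg (mul_nonneg hc.le (by positivity)) hτ.le
    have hbase : 0 < 1 + cmn m n * ‖x‖ ^ 2 / τ := by linarith
    unfold wModel
    simp only [mul_zero, add_zero, one_pow, sub_zero]
    rw [Real.mul_rpow (Real.rpow_nonneg hτ.le _) (Real.rpow_nonneg hbase.le _),
      ← Real.rpow_mul hτ.le, ← Real.rpow_mul hbase.le]
    congr 1
    · congr 1
      field_simp
      try ring
    · congr 1
      field_simp
      try ring
  have hbound : ∀ x ∈ {x : EuclideanSpace ℝ (Fin (n - 1)) | ε ≤ ‖x‖},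
      τ ^ (-(((n : ℝ) - 1) / 2)) * (1 + cmn m n * ‖x‖ ^ 2 / τ) ^ (-(m + (n : ℝ) - 1))
        ≤ (τ ^ (-(((n : ℝ) - 1) / 2)) * (τ * (cmn m n)⁻¹) ^ (m + (n : ℝ) - 1)) *
            ‖x‖ ^ (-(2 * (m + (n : ℝ) - 1))) := by
    intro x hx
    have hx0 : 0 < ‖x‖ := lt_of_lt_of_le hε hx
    have ha : 0 < τ * (cmn m n)⁻¹ := mul_pos hτ (inv_pos.2 hc)
    have hApos : 0 < cmn m n * ‖x‖ ^ 2 / τ := div_pos (mul_pos hc (pow_pos hx0 2)) hτ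
    have hA : cmn m n * ‖x‖ ^ 2 / τ ≤ 1 + cmn m n * ‖x‖ ^ 2 / τ := by linarith
    have step1 : (1 + cmn m n * ‖x‖ ^ 2 / τ) ^ (-(m + (n : ℝ) - 1))
        ≤ (cmn m n * ‖x‖ ^ 2 / τ) ^ (-(m + (n : ℝ) - 1)) :=
      Real.rpow_le_rpow_of_nonpos hApos hA (by linarith)
    have step2 : (cmn m n * ‖x‖ ^ 2 / τ) ^ (-(m + (n : ℝ) - 1))
        = (τ * (cmn m n)⁻¹) ^ (m + (n : ℝ) - 1) * ‖x‖ ^ (-(2 * (m + (n : ℝ) - 1))) := by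
      have e1 : cmn m n * ‖x‖ ^ 2 / τ = (τ * (cmn m n)⁻¹)⁻¹ * ‖x‖ ^ (2:ℝ) := by
        rw [show (2:ℝ) = ((2:ℕ):ℝ) by norm_num, Real.rpow_natCast]
        field_simp
        try ring
      rw [e1, Real.mul_rpow (by positivity) (Real.rpow_nonneg (norm_nonneg x) _),
        Real.inv_rpow ha.le, ← Real.rpow_neg ha.le, neg_neg,
        ← Real.rpow_mul (norm_nonneg x)]
      congr 1
      ring
    calc τ ^ (-(((n : ℝ) - 1) / 2)) * (1 + cmn m n * ‖x‖ ^ 2 / τ) ^ (-(m + (n : ℝ) - 1))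
        ≤ τ ^ (-(((n : ℝ) - 1) / 2)) * ((cmn m n * ‖x‖ ^ 2 / τ) ^ (-(m + (n : ℝ) - 1))) :=
          mul_le_mul_of_nonneg_left step1 (Real.rpow_nonneg hτ.le _)
      _ = (τ ^ (-(((n : ℝ) - 1) / 2)) * (τ * (cmn m n)⁻¹) ^ (m + (n : ℝ) - 1)) *
            ‖x‖ ^ (-(2 * (m + (n : ℝ) - 1))) := by rw [step2]; ring
  have hInt : IntegrableOn
      (fun x : EuclideanSpace ℝ (Fin (n - 1)) =>
        (τ ^ (-(((n : ℝ) - 1) / 2)) * (τ * (cmn m n)⁻¹) ^ (m + (n : ℝ) - 1)) *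
          ‖x‖ ^ (-(2 * (m + (n : ℝ) - 1))))
      {x : EuclideanSpace ℝ (Fin (n - 1)) | ε ≤ ‖x‖} :=
    (tail_integrableOn (n - 1) (2 * (m + (n : ℝ) - 1)) ε hks hε).const_mul _
  have key : (∫ x in {x : EuclideanSpace ℝ (Fin (n - 1)) | ε ≤ ‖x‖},
        wModel m n 0 τ (x, (0 : ℝ)) ^ (2 * (m + (n:ℝ) - 1) / (m + (n:ℝ) - 2)))
      ≤ (τ ^ (-(((n : ℝ) - 1) / 2)) * (τ * (cmn m n)⁻¹) ^ (m + (n : ℝ) - 1)) *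
          ((((n - 1 : ℕ) : ℝ) * V) *
            (ε ^ (((n - 1 : ℕ) : ℝ) - 2 * (m + (n : ℝ) - 1)) /
              (2 * (m + (n : ℝ) - 1) - ((n - 1 : ℕ) : ℝ)))) := by
    rw [hV_def, show (((n - 1 : ℕ) : ℝ) * (volume (Metric.ball
          (0 : EuclideanSpace ℝ (Fin (n - 1))) 1)).toReal) *
            (ε ^ (((n - 1 : ℕ) : ℝ) - 2 * (m + (n : ℝ) - 1)) /
              (2 * (m + (n : ℝ) - 1) - ((n - 1 : ℕ) : ℝ)))
          = ∫ x in {x : EuclideanSpace ℝ (Fin (n - 1)) | ε ≤ ‖x‖},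
              ‖x‖ ^ (-(2 * (m + (n : ℝ) - 1)))
        from (tail_integral (n - 1) (by omega) (2 * (m + (n : ℝ) - 1)) ε hks hε).symm,
      ← MeasureTheory.integral_const_mul]
    simp only [hw]
    refine integral_mono_of_nonneg ?_ hInt ?_
    · filter_upwards with x
      have hb : (0:ℝ) ≤ 1 + cmn m n * ‖x‖ ^ 2 / τ :=
        add_nonneg zero_le_one (div_nonneg (mul_nonneg hc.le (by positivity)) hτ.le)
      exact mul_nonneg (Real.rpow_nonneg hτ.le _) (Real.rpow_nonneg hb _)
    · filter_upwards [ae_restrict_mem hmeas] with x hx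
      exact hbound x hx
  refine le_trans key (le_of_eq ?_)
  have hτs : τ ^ (-(((n : ℝ) - 1) / 2)) * τ ^ (m + (n : ℝ) - 1) = τ ^ (m + ((n : ℝ) - 1) / 2) := by
    rw [← Real.rpow_add hτ]; congr 1; ring
  rw [Real.mul_rpow hτ.le (inv_nonneg.2 hc.le), hkcast,
    show ((n:ℝ) - 1 - 2 * (m + (n : ℝ) - 1)) = 1 - (n:ℝ) - 2 * m by ring]
  calc τ ^ (-(((n : ℝ) - 1) / 2)) * (τ ^ (m + (n : ℝ) - 1) * (cmn m n)⁻¹ ^ (m + (n : ℝ) - 1)) *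
        ((((n:ℝ) - 1) * V) *
          (ε ^ (1 - (n:ℝ) - 2*m) / (2 * (m + (n : ℝ) - 1) - ((n:ℝ) - 1))))
      = (τ ^ (-(((n : ℝ) - 1) / 2)) * τ ^ (m + (n : ℝ) - 1)) *
          ((cmn m n)⁻¹ ^ (m + (n : ℝ) - 1) *
            (((n:ℝ) - 1) * V / (2 * (m + (n : ℝ) - 1) - ((n:ℝ) - 1))) *
            ε ^ (1 - (n:ℝ) - 2*m)) := by ring
    _ = (cmn m n)⁻¹ ^ (m + (n : ℝ) - 1) *
          (((n:ℝ) - 1) * V / (2 * (m + (n : ℝ) - 1) - ((n:ℝ) - 1))) *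
          ε ^ (1 - (n:ℝ) - 2*m) * τ ^ (m + ((n : ℝ) - 1) / 2) := by rw [hτs]; ring
end
end

section
/- Let m > 0 be a real number and n ≥ 3 an integer. There exists a constant C > 0 depending only on m and n such that for every τ > 0, one has ∫_{ℝ^{n−1}} w_{0,τ}(x,0)² dx ≤ C · τ^{(n−1)/(2(m+n−1))}. -/
open MeasureTheory Real

noncomputable section

theorem wModel_boundary_L2_estimate (m : ℝ) (hm : 0 < m) (n : ℕ) (hn : 3 ≤ n) :
    ∃ C : ℝ, 0 < C ∧ ∀ τ : ℝ, 0 < τ →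
      (∫ x : EuclideanSpace ℝ (Fin (n - 1)), wModel m n 0 τ (x, (0 : ℝ)) ^ 2) ≤
        C * τ ^ (((n : ℝ) - 1) / (2 * (m + n - 1))) := by
  have hn3 : (3 : ℝ) ≤ (n : ℝ) := by exact_mod_cast hn
  have hs : (0 : ℝ) < m + n - 2 := by linarith
  have hs1 : (0 : ℝ) < m + n - 1 := by linarith
  have hc : 0 < cmn m n := by
    unfold cmn; positivity
  set s : ℝ := m + n - 2 with hsdef
  set I : ℝ := ∫ y : EuclideanSpace ℝ (Fin (n - 1)), (1 + ‖y‖ ^ 2) ^ (-s) with hI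
  have hI0 : 0 ≤ I := by
    apply integral_nonneg
    intro y
    apply Real.rpow_nonneg
    positivity
  have hD : ((n : ℝ) - 1) = ((n - 1 : ℕ) : ℝ) := by
    have h1 : (1 : ℕ) ≤ n := by omega
    push_cast [Nat.cast_sub h1]; ring
  refine ⟨cmn m n ^ (-(((n : ℝ) - 1) / 2)) * I + 1, by positivity, fun τ hτ => ?_⟩
  set σ : ℝ := (cmn m n / τ) ^ ((1 : ℝ) / 2) with hσ
  have hσpos : 0 < σ := Real.rpow_pos_of_pos (by positivity) _
  have hσsq : σ ^ 2 = cmn m n / τ := by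
    rw [hσ, ← Real.rpow_natCast ((cmn m n / τ) ^ ((1:ℝ)/2)) 2,
      ← Real.rpow_mul (by positivity)]
    norm_num
  set γ : ℝ := -(((n : ℝ) - 1) * (m + n - 2)) / (4 * (m + n - 1)) with hγ
  have key : ∀ x : EuclideanSpace ℝ (Fin (n - 1)),
      wModel m n 0 τ (x, (0 : ℝ)) ^ 2 = τ ^ (2 * γ) * ((1 + ‖σ • x‖ ^ 2) ^ (-s)) := by
    intro x
    have hnorm : ‖σ • x‖ ^ 2 = cmn m n * ‖x‖ ^ 2 / τ := by
      rw [norm_smul, Real.norm_eq_abs, abs_of_pos hσpos, mul_pow, hσsq]; ring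
    have hA : (0 : ℝ) < 1 + cmn m n * ‖x‖ ^ 2 / τ := by positivity
    rw [hnorm]
    unfold wModel
    simp only [sub_zero, mul_zero, add_zero, one_pow]
    rw [mul_pow, ← Real.rpow_natCast (τ ^ γ) 2, ← Real.rpow_mul hτ.le,
      ← Real.rpow_natCast ((1 + cmn m n * ‖x‖ ^ 2 / τ) ^ (-(s/2))) 2,
      ← Real.rpow_mul hA.le]
    push_cast
    rw [show γ * (2:ℝ) = 2 * γ by ring, show -(s/2) * (2:ℝ) = -s by ring]
  rw [MeasureTheory.integral_congr_ae (Filter.Eventually.of_forall key),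
    MeasureTheory.integral_const_mul,
    MeasureTheory.Measure.integral_comp_smul_of_nonneg
      (volume : Measure (EuclideanSpace ℝ (Fin (n - 1))))
      (fun y : EuclideanSpace ℝ (Fin (n - 1)) => (1 + ‖y‖ ^ 2) ^ (-s)) σ
      (hR := hσpos.le)]
  rw [smul_eq_mul, finrank_euclideanSpace_fin, ← hI]
  have hσpow : (σ ^ (n - 1) : ℝ)⁻¹ = cmn m n ^ (-(((n : ℝ) - 1) / 2)) * τ ^ (((n : ℝ) - 1) / 2) := by
    rw [hσ, ← Real.rpow_natCast ((cmn m n / τ) ^ ((1:ℝ)/2)) (n-1),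
      ← Real.rpow_mul (by positivity), ← Real.rpow_neg (by positivity),
      Real.div_rpow hc.le hτ.le, div_eq_mul_inv, ← Real.rpow_neg hτ.le, ← hD]
    ring_nf
  rw [hσpow]
  have hexp : τ ^ (2 * γ) * (cmn m n ^ (-(((n : ℝ) - 1) / 2)) * τ ^ (((n : ℝ) - 1) / 2) * I)
      = cmn m n ^ (-(((n : ℝ) - 1) / 2)) * I * τ ^ (((n : ℝ) - 1) / (2 * (m + n - 1))) := by
    rw [show τ ^ (2 * γ) * (cmn m n ^ (-(((n : ℝ) - 1) / 2)) * τ ^ (((n : ℝ) - 1) / 2) * I)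
        = cmn m n ^ (-(((n : ℝ) - 1) / 2)) * I * (τ ^ (2 * γ) * τ ^ (((n : ℝ) - 1) / 2)) by ring,
      ← Real.rpow_add hτ]
    have hne : m + (n:ℝ) - 1 ≠ 0 := ne_of_gt hs1
    have hexp2 : 2 * γ + ((n:ℝ) - 1) / 2 = ((n:ℝ) - 1) / (2 * (m + n - 1)) := by
      rw [hγ]; field_simp; ring
    rw [hexp2]
  rw [hexp]
  have hτp : 0 < τ ^ (((n : ℝ) - 1) / (2 * (m + n - 1))) := Real.rpow_pos_of_pos hτ _
  nlinarith [mul_nonneg (mul_nonneg (Real.rpow_nonneg hc.le (-(((n : ℝ) - 1) / 2))) hI0) hτp.le]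
end
end
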